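/- Let 0 < δ < 1 and let n ≥ 2 be an integer with δ·(n−1) ≤ 1, and set m = ⌊δ·n(n−1)/2⌋. Then f⁻(n,δ) = n!·2^{−m}; that is, every partial order Q on n points with comp(Q) ≤ δ·n(n−1)/2 satisfies e(Q) ≥ n!·2^{−m}, and some such partial order attains this value. -/

import Mathlib

/-- The number of linear extensions of a partial order `P` on `n` points:
bijections to `{1, ..., n}` (modeled as `Fin n` with its usual order) that
are strictly monotone with respect to `P`. -/
noncomputable def linExtCount (n : ℕ) (P : PartialOrder (Fin n)) : ℕ :=
  Nat.card {f : Fin n ≃ Fin n // ∀ x y : Fin n, P.lt x y → f x < f y}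

/-- The number of comparable pairs of `P`: each unordered comparable pair
`{x, y}` corresponds to exactly one ordered pair `(x, y)` with `x ≺ y`. -/
noncomputable def compCount (n : ℕ) (P : PartialOrder (Fin n)) : ℕ :=
  Nat.card {p : Fin n × Fin n // P.lt p.1 p.2}

/-- `f⁻(n, δ)`: the minimum number of linear extensions over partial orders on
`n` points with at most `δ·n(n-1)/2` comparable pairs. -/
noncomputable def fMinus (n : ℕ) (δ : ℝ) : ℕ :=
  sInf {m : ℕ | ∃ P : PartialOrder (Fin n),
    (compCount n P : ℝ) ≤ δ * ((n : ℝ) * ((n : ℝ) - 1) / 2) ∧ linExtCount n P = m}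

section Aux

variable {n : ℕ}

private lemma fin_lt_trans {a b c : Fin n} (h1 : a < b) (h2 : b < c) : a < c := by
  have hv1 : a.val < b.val := h1
  have hv2 : b.val < c.val := h2
  show a.val < c.val
  omega

private lemma fin_lt_of_not_lt {a b : Fin n} (h : ¬ a < b) (hne : b ≠ a) : b < a := by
  have hv : ¬ a.val < b.val := h
  have hv2 : b.val ≠ a.val := fun hc => hne (Fin.ext hc)
  show b.val < a.val
  omega

private lemma fin_not_lt_of_lt {a b : Fin n} (h : a < b) : ¬ b < a := by
  have hv : a.val < b.val := h
  intro hc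
  have hv2 : b.val < a.val := hc
  omega

private lemma plt_irrefl (P : PartialOrder (Fin n)) (a : Fin n) : ¬ P.lt a a := by
  intro h
  exact ((P.lt_iff_le_not_ge a a).1 h).2 ((P.lt_iff_le_not_ge a a).1 h).1

private lemma plt_ne (P : PartialOrder (Fin n)) {a b : Fin n} (h : P.lt a b) : a ≠ b := by
  rintro rfl; exact plt_irrefl P a h

private lemma plt_trans (P : PartialOrder (Fin n)) {a b c : Fin n}
    (h1 : P.lt a b) (h2 : P.lt b c) : P.lt a c := by
  obtain ⟨h1a, h1b⟩ := (P.lt_iff_le_not_ge a b).1 h1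
  obtain ⟨h2a, h2b⟩ := (P.lt_iff_le_not_ge b c).1 h2
  refine (P.lt_iff_le_not_ge a c).2 ⟨P.le_trans a b c h1a h2a, fun hca => ?_⟩
  exact h1b (P.le_trans b c a h2a hca)

/-- If `f` is an extension of `P`, `Q` is `P` plus the single relation `x < y`,
and `f` puts `y` before `x`, then swapping the positions of `x` and `y` gives
an extension of `Q`. -/
private lemma swap_mem (P Q : PartialOrder (Fin n)) (x y : Fin n)
    (hQ : ∀ a b, Q.lt a b ↔ P.lt a b ∨ (a = x ∧ b = y))
    (f : Fin n ≃ Fin n) (hf : ∀ a b, P.lt a b → f a < f b) (hyx : f y < f x) :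
    ∀ a b, Q.lt a b →
      (Equiv.swap (f x) (f y)) (f a) < (Equiv.swap (f x) (f y)) (f b) := by
  have hQxy : Q.lt x y := (hQ x y).2 (Or.inr ⟨rfl, rfl⟩)
  intro a b hab
  rcases (hQ a b).1 hab with h | ⟨rfl, rfl⟩
  · have hfab := hf a b h
    have hQab : Q.lt a b := (hQ a b).2 (Or.inl h)
    by_cases hax : a = x
    · subst hax
      by_cases hby : b = y
      · subst hby
        rw [Equiv.swap_apply_left, Equiv.swap_apply_right]; exact hyx
      · have hbx : b ≠ a := (plt_ne P h).symm
        rw [Equiv.swap_apply_left,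
          Equiv.swap_apply_of_ne_of_ne (f.injective.ne hbx) (f.injective.ne hby)]
        exact fin_lt_trans hyx hfab
    · by_cases hay : a = y
      · subst hay
        have hQxb : Q.lt x b := plt_trans Q hQxy hQab
        have hbx : b ≠ x := fun hbx => plt_irrefl Q x (hbx ▸ hQxb)
        have hby : b ≠ a := (plt_ne P h).symm
        have hPxb : P.lt x b := by
          rcases (hQ x b).1 hQxb with h' | ⟨_, rfl⟩
          · exact h'
          · exact absurd rfl hby
        rw [Equiv.swap_apply_right,
          Equiv.swap_apply_of_ne_of_ne (f.injective.ne hbx) (f.injective.ne hby)]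
        exact hf x b hPxb
      · rw [Equiv.swap_apply_of_ne_of_ne (f.injective.ne hax) (f.injective.ne hay)]
        by_cases hbx : b = x
        · subst hbx
          have hQay : Q.lt a y := plt_trans Q hQab hQxy
          have hPay : P.lt a y := by
            rcases (hQ a y).1 hQay with h' | ⟨rfl, _⟩
            · exact h'
            · exact absurd rfl hax
          rw [Equiv.swap_apply_left]
          exact hf a y hPay
        · by_cases hby : b = y
          · subst hby
            rw [Equiv.swap_apply_right]
            exact fin_lt_trans hfab hyx
          · rw [Equiv.swap_apply_of_ne_of_ne (f.injective.ne hbx) (f.injective.ne hby)]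
            exact hfab
  · rw [Equiv.swap_apply_left, Equiv.swap_apply_right]; exact hyx

private lemma recover (f : Fin n ≃ Fin n) (x y : Fin n) :
    (f.trans (Equiv.swap (f x) (f y))).trans
      (Equiv.swap ((f.trans (Equiv.swap (f x) (f y))) x)
        ((f.trans (Equiv.swap (f x) (f y))) y)) = f := by
  ext a
  simp only [Equiv.trans_apply, Equiv.swap_apply_left, Equiv.swap_apply_right]
  rw [Equiv.swap_comm (f y) (f x), Equiv.swap_apply_self]

/-- The basic map: an extension of `P` goes to an extension of `Q = P + (x<y)`
together with a bit recording whether it had to be modified. -/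
private def Phi (P Q : PartialOrder (Fin n)) (x y : Fin n) (hxy : x ≠ y)
    (hQ : ∀ a b, Q.lt a b ↔ P.lt a b ∨ (a = x ∧ b = y)) :
    {f : Fin n ≃ Fin n // ∀ a b, P.lt a b → f a < f b} →
      {f : Fin n ≃ Fin n // ∀ a b, Q.lt a b → f a < f b} × Bool :=
  fun f =>
    if h : f.1 x < f.1 y then
      (⟨f.1, fun a b hab => by
        rcases (hQ a b).1 hab with h' | ⟨rfl, rfl⟩
        · exact f.2 a b h'
        · exact h⟩, true)
    else
      (⟨f.1.trans (Equiv.swap (f.1 x) (f.1 y)), fun a b hab => by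
        have hyx : f.1 y < f.1 x :=
          fin_lt_of_not_lt h (f.1.injective.ne hxy).symm
        simpa using swap_mem P Q x y hQ f.1 f.2 hyx a b hab⟩, false)

private lemma Phi_inj (P Q : PartialOrder (Fin n)) (x y : Fin n) (hxy : x ≠ y)
    (hQ : ∀ a b, Q.lt a b ↔ P.lt a b ∨ (a = x ∧ b = y)) :
    Function.Injective (Phi P Q x y hxy hQ) := by
  intro f g hfg
  unfold Phi at hfg
  split_ifs at hfg with h1 h2 h2
  · exact Subtype.ext (congrArg (fun p => p.1.1) hfg)
  · exact Bool.noConfusion (congrArg Prod.snd hfg)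
  · exact Bool.noConfusion (congrArg Prod.snd hfg)
  · have E : f.1.trans (Equiv.swap (f.1 x) (f.1 y)) =
        g.1.trans (Equiv.swap (g.1 x) (g.1 y)) := congrArg (fun p => p.1.1) hfg
    have e1 := recover f.1 x y
    rw [E, recover g.1 x y] at e1
    exact Subtype.ext e1.symm

private lemma Phi_surj (P Q : PartialOrder (Fin n)) (x y : Fin n) (hxy : x ≠ y)
    (hQ : ∀ a b, Q.lt a b ↔ P.lt a b ∨ (a = x ∧ b = y))
    (hiso : ∀ a b, P.lt a b → a ≠ x ∧ a ≠ y ∧ b ≠ x ∧ b ≠ y) :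
    Function.Surjective (Phi P Q x y hxy hQ) := by
  have hQxy : Q.lt x y := (hQ x y).2 (Or.inr ⟨rfl, rfl⟩)
  rintro ⟨g, b⟩
  cases b with
  | true =>
      refine ⟨⟨g.1, fun a b hab => g.2 a b ((hQ a b).2 (Or.inl hab))⟩, ?_⟩
      unfold Phi
      rw [dif_pos (g.2 x y hQxy)]
  | false =>
      have hgxy := g.2 x y hQxy
      refine ⟨⟨g.1.trans (Equiv.swap (g.1 x) (g.1 y)), fun a b hab => ?_⟩, ?_⟩
      · obtain ⟨hax, hay, hbx, hby⟩ := hiso a b hab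
        simp only [Equiv.trans_apply]
        rw [Equiv.swap_apply_of_ne_of_ne (g.1.injective.ne hax) (g.1.injective.ne hay),
            Equiv.swap_apply_of_ne_of_ne (g.1.injective.ne hbx) (g.1.injective.ne hby)]
        exact g.2 a b ((hQ a b).2 (Or.inl hab))
      · unfold Phi
        rw [dif_neg]
        · refine Prod.ext ?_ rfl
          apply Subtype.ext
          simpa using recover g.1 x y
        · simp only [Equiv.trans_apply, Equiv.swap_apply_left, Equiv.swap_apply_right]
          exact fin_not_lt_of_lt hgxy

private lemma linExt_le (P Q : PartialOrder (Fin n)) (x y : Fin n) (hxy : x ≠ y)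
    (hQ : ∀ a b, Q.lt a b ↔ P.lt a b ∨ (a = x ∧ b = y)) :
    linExtCount n P ≤ 2 * linExtCount n Q := by
  have h := Nat.card_le_card_of_injective _ (Phi_inj P Q x y hxy hQ)
  rw [Nat.card_prod] at h
  have hb : Nat.card Bool = 2 := by simp [Nat.card_eq_fintype_card]
  rw [hb] at h
  unfold linExtCount
  omega

private lemma linExt_eq (P Q : PartialOrder (Fin n)) (x y : Fin n) (hxy : x ≠ y)
    (hQ : ∀ a b, Q.lt a b ↔ P.lt a b ∨ (a = x ∧ b = y))
    (hiso : ∀ a b, P.lt a b → a ≠ x ∧ a ≠ y ∧ b ≠ x ∧ b ≠ y) :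
    linExtCount n P = 2 * linExtCount n Q := by
  have h := Nat.card_eq_of_bijective _
    ⟨Phi_inj P Q x y hxy hQ, Phi_surj P Q x y hxy hQ hiso⟩
  rw [Nat.card_prod] at h
  have hb : Nat.card Bool = 2 := by simp [Nat.card_eq_fintype_card]
  rw [hb] at h
  unfold linExtCount
  omega

private lemma linExtCount_of_no_lt (P : PartialOrder (Fin n))
    (h : ∀ a b, ¬ P.lt a b) : linExtCount n P = n.factorial := by
  unfold linExtCount
  have e : {f : Fin n ≃ Fin n // ∀ a b : Fin n, P.lt a b → f a < f b} ≃ (Fin n ≃ Fin n) :=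
    Equiv.subtypeUnivEquiv (fun f a b hab => absurd hab (h a b))
  rw [Nat.card_congr e, Nat.card_eq_fintype_card, Fintype.card_equiv (Equiv.refl _),
    Fintype.card_fin]

/-- Removing a covering relation from a partial order. -/
private def removePair (P : PartialOrder (Fin n)) (x y : Fin n) (hxy : P.lt x y)
    (hcov : ∀ z, ¬(P.lt x z ∧ P.lt z y)) : PartialOrder (Fin n) where
  le a b := P.le a b ∧ ¬(a = x ∧ b = y)
  lt a b := P.lt a b ∧ ¬(a = x ∧ b = y)
  le_refl a := ⟨P.le_refl a, by rintro ⟨rfl, rfl⟩; exact plt_irrefl P a hxy⟩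
  le_trans := by
    rintro a b c ⟨h1, h1'⟩ ⟨h2, h2'⟩
    refine ⟨P.le_trans a b c h1 h2, ?_⟩
    rintro ⟨rfl, rfl⟩
    by_cases hbx : b = a
    · exact h2' ⟨hbx, rfl⟩
    · by_cases hby : b = c
      · exact h1' ⟨rfl, hby⟩
      · refine hcov b ⟨?_, ?_⟩
        · refine (P.lt_iff_le_not_ge a b).2 ⟨h1, fun hba => ?_⟩
          exact hbx (P.le_antisymm b a hba h1)
        · refine (P.lt_iff_le_not_ge b c).2 ⟨h2, fun hcb => ?_⟩
          exact hby (P.le_antisymm b c h2 hcb)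
  lt_iff_le_not_ge := by
    intro a b
    constructor
    · rintro ⟨hab, hp⟩
      obtain ⟨hle1, hnba⟩ := (P.lt_iff_le_not_ge a b).1 hab
      exact ⟨⟨hle1, hp⟩, fun h => hnba h.1⟩
    · rintro ⟨⟨hab, hp⟩, hnot⟩
      refine ⟨?_, hp⟩
      refine (P.lt_iff_le_not_ge a b).2 ⟨hab, fun hba => ?_⟩
      apply hnot
      refine ⟨hba, ?_⟩
      rintro ⟨rfl, rfl⟩
      exact ((P.lt_iff_le_not_ge b a).1 hxy).2 hab
  le_antisymm := by
    rintro a b ⟨h1, _⟩ ⟨h2, _⟩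
    exact P.le_antisymm a b h1 h2

private lemma removePair_lt (P : PartialOrder (Fin n)) (x y : Fin n) (hxy : P.lt x y)
    (hcov : ∀ z, ¬(P.lt x z ∧ P.lt z y)) (a b : Fin n) :
    (removePair P x y hxy hcov).lt a b ↔ P.lt a b ∧ ¬(a = x ∧ b = y) := Iff.rfl

private lemma compCount_removePair (P : PartialOrder (Fin n)) (x y : Fin n)
    (hxy : P.lt x y) (hcov : ∀ z, ¬(P.lt x z ∧ P.lt z y)) :
    compCount n (removePair P x y hxy hcov) + 1 = compCount n P := by
  classical
  have e : {p : Fin n × Fin n // (removePair P x y hxy hcov).lt p.1 p.2} ≃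
      ({p : Fin n × Fin n | P.lt p.1 p.2} \ {(x, y)} : Set (Fin n × Fin n)) := by
    apply Equiv.subtypeEquivRight
    intro p
    rw [removePair_lt]
    constructor
    · rintro ⟨h1, h2⟩
      exact ⟨h1, fun hc => h2 ⟨congrArg Prod.fst hc, congrArg Prod.snd hc⟩⟩
    · rintro ⟨h1, h2⟩
      exact ⟨h1, fun hc => h2 (Prod.ext hc.1 hc.2)⟩
  have hmem : (x, y) ∈ {p : Fin n × Fin n | P.lt p.1 p.2} := hxy
  have hfin : ({p : Fin n × Fin n | P.lt p.1 p.2} : Set (Fin n × Fin n)).Finite :=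
    Set.toFinite _
  have hkey := Set.ncard_diff_singleton_add_one hmem hfin
  unfold compCount
  rw [Nat.card_congr e]
  have h1 : Nat.card ({p : Fin n × Fin n | P.lt p.1 p.2} \ {(x, y)} : Set (Fin n × Fin n))
      = ({p : Fin n × Fin n | P.lt p.1 p.2} \ {(x, y)} : Set (Fin n × Fin n)).ncard := rfl
  have h2 : Nat.card {p : Fin n × Fin n // P.lt p.1 p.2}
      = ({p : Fin n × Fin n | P.lt p.1 p.2} : Set (Fin n × Fin n)).ncard := rfl
  rw [h1, h2]
  exact hkey

private lemma exists_cover (P : PartialOrder (Fin n)) (h : compCount n P ≠ 0) :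
    ∃ x y, P.lt x y ∧ ∀ z, ¬(P.lt x z ∧ P.lt z y) := by
  classical
  have hne : Nonempty {p : Fin n × Fin n // P.lt p.1 p.2} := by
    unfold compCount at h
    exact (Nat.card_ne_zero.mp h).1
  obtain ⟨⟨⟨a, b⟩, hab⟩⟩ := hne
  letI := P
  have hsne : (Finset.univ.filter (fun z => P.lt z b)).Nonempty :=
    ⟨a, by simp only [Finset.mem_filter, Finset.mem_univ, true_and]; exact hab⟩
  obtain ⟨x, hxs, hmax⟩ := @Finset.exists_maximal (Fin n) P.toLE _ _ hsne
  simp only [Finset.mem_filter] at hxs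
  refine ⟨x, b, hxs.2, ?_⟩
  rintro z ⟨h1, h2⟩
  exact ((P.lt_iff_le_not_ge x z).1 h1).2
    (hmax (by simp only [Finset.mem_filter, Finset.mem_univ, true_and]; exact h2) ((P.lt_iff_le_not_ge x z).1 h1).1)

/-- The key lower bound: `n! ≤ e(P) · 2^{comp(P)}`. -/
private lemma lower_bound (c : ℕ) :
    ∀ P : PartialOrder (Fin n), compCount n P = c →
      n.factorial ≤ linExtCount n P * 2 ^ compCount n P := by
  induction c with
  | zero =>
      intro P hc
      have hno : ∀ a b, ¬ P.lt a b := by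
        intro a b hab
        have h1 : Nonempty {p : Fin n × Fin n // P.lt p.1 p.2} := ⟨⟨(a, b), hab⟩⟩
        have h2 := Nat.card_ne_zero.2 ⟨h1, inferInstance⟩
        unfold compCount at hc
        exact h2 hc
      rw [hc, pow_zero, mul_one, linExtCount_of_no_lt P hno]
  | succ c ih =>
      intro P hc
      obtain ⟨x, y, hxy, hcov⟩ := exists_cover P (by omega)
      have hc' : compCount n (removePair P x y hxy hcov) = c := by
        have hh := compCount_removePair P x y hxy hcov
        rw [hc] at hh
        exact Nat.add_right_cancel hh
      have hxny : x ≠ y := plt_ne P hxy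
      have hQ : ∀ a b, P.lt a b ↔ (removePair P x y hxy hcov).lt a b ∨ (a = x ∧ b = y) := by
        intro a b
        rw [removePair_lt]
        constructor
        · intro h
          by_cases hp : a = x ∧ b = y
          · exact Or.inr hp
          · exact Or.inl ⟨h, hp⟩
        · rintro (⟨h, _⟩ | ⟨rfl, rfl⟩)
          · exact h
          · exact hxy
      have hle := linExt_le (removePair P x y hxy hcov) P x y hxny hQ
      have hih := ih (removePair P x y hxy hcov) hc'
      rw [hc'] at hih
      rw [hc, pow_succ]
      calc n.factorial ≤ linExtCount n (removePair P x y hxy hcov) * 2 ^ c := hih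
        _ ≤ 2 * linExtCount n P * 2 ^ c := Nat.mul_le_mul_right _ hle
        _ = linExtCount n P * (2 ^ c * 2) := by ring

/-- The matching poset: `m` disjoint relations `2i < 2i+1`. -/
private def matchP (n m : ℕ) : PartialOrder (Fin n) where
  le a b := a = b ∨ (a.val % 2 = 0 ∧ b.val = a.val + 1 ∧ b.val < 2 * m)
  lt a b := a.val % 2 = 0 ∧ b.val = a.val + 1 ∧ b.val < 2 * m
  le_refl a := Or.inl rfl
  le_trans := by
    rintro a b c (rfl | h1) hbc
    · exact hbc
    · rcases hbc with rfl | h2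
      · exact Or.inr h1
      · exfalso; omega
  lt_iff_le_not_ge := by
    intro a b
    constructor
    · intro h
      obtain ⟨ha, hb', hc'⟩ := h
      refine ⟨Or.inr ⟨ha, hb', hc'⟩, ?_⟩
      rintro (rfl | h2)
      · omega
      · omega
    · rintro ⟨rfl | h1, h2⟩
      · exact absurd (Or.inl rfl) h2
      · exact h1
  le_antisymm := by
    rintro a b (rfl | h1) hba
    · rfl
    · rcases hba with rfl | h2
      · rfl
      · exfalso; omega

private lemma matchP_lt (n m : ℕ) (a b : Fin n) :
    (matchP n m).lt a b ↔ (a.val % 2 = 0 ∧ b.val = a.val + 1 ∧ b.val < 2 * m) := Iff.rfl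

private lemma compCount_matchP (n m : ℕ) (h : 2 * m ≤ n) :
    compCount n (matchP n m) = m := by
  unfold compCount
  have e : {p : Fin n × Fin n // (matchP n m).lt p.1 p.2} ≃ Fin m :=
    { toFun := fun p => ⟨p.1.1.val / 2, by
        have := (matchP_lt n m p.1.1 p.1.2).1 p.2; omega⟩
      invFun := fun i => ⟨(⟨2 * i.val, by omega⟩, ⟨2 * i.val + 1, by omega⟩), by
        show (2 * i.val) % 2 = 0 ∧ (2 * i.val + 1) = 2 * i.val + 1 ∧ 2 * i.val + 1 < 2 * m
        omega⟩
      left_inv := fun p => by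
        have := (matchP_lt n m p.1.1 p.1.2).1 p.2
        apply Subtype.ext
        apply Prod.ext <;> apply Fin.ext <;> simp only <;> omega
      right_inv := fun i => by
        apply Fin.ext
        show 2 * i.val / 2 = i.val
        omega }
  rw [Nat.card_congr e, Nat.card_eq_fintype_card, Fintype.card_fin]

private lemma matchP_count (n : ℕ) :
    ∀ m, 2 * m ≤ n → linExtCount n (matchP n m) * 2 ^ m = n.factorial := by
  intro m
  induction m with
  | zero =>
      intro _
      rw [pow_zero, mul_one]
      apply linExtCount_of_no_lt
      intro a b hab
      rw [matchP_lt] at hab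
      omega
  | succ m ih =>
      intro h
      have h2m : 2 * m ≤ n := by omega
      set x : Fin n := ⟨2 * m, by omega⟩ with hx
      set y : Fin n := ⟨2 * m + 1, by omega⟩ with hy
      have hxval : x.val = 2 * m := rfl
      have hyval : y.val = 2 * m + 1 := rfl
      have hxy : x ≠ y := by
        intro hc
        have := congrArg Fin.val hc
        rw [hxval, hyval] at this
        omega
      have hQ : ∀ a b : Fin n, (matchP n (m + 1)).lt a b ↔
          (matchP n m).lt a b ∨ (a = x ∧ b = y) := by
        intro a b
        rw [matchP_lt, matchP_lt]
        have hax : (a = x) ↔ a.val = 2 * m := by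
          rw [Fin.ext_iff, hxval]
        have hby : (b = y) ↔ b.val = 2 * m + 1 := by
          rw [Fin.ext_iff, hyval]
        rw [hax, hby]
        omega
      have hiso : ∀ a b : Fin n, (matchP n m).lt a b →
          a ≠ x ∧ a ≠ y ∧ b ≠ x ∧ b ≠ y := by
        intro a b hab
        rw [matchP_lt] at hab
        refine ⟨?_, ?_, ?_, ?_⟩ <;>
          (intro hc; have := congrArg Fin.val hc; rw [Fin.ext_iff] at hc; omega)
      have heq := linExt_eq (matchP n m) (matchP n (m + 1)) x y hxy hQ hiso
      have hce := ih h2m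
      rw [heq] at hce
      rw [pow_succ]
      calc linExtCount n (matchP n (m + 1)) * (2 ^ m * 2)
          = 2 * linExtCount n (matchP n (m + 1)) * 2 ^ m := by ring
        _ = n.factorial := hce

end Aux

theorem fminus_very_sparse (δ : ℝ) (hδ0 : 0 < δ) (hδ1 : δ < 1) (n : ℕ) (hn : 2 ≤ n)
    (hvs : δ * ((n : ℝ) - 1) ≤ 1) :
    (fMinus n δ : ℝ) =
        (Nat.factorial n : ℝ) / 2 ^ ⌊δ * ((n : ℝ) * ((n : ℝ) - 1) / 2)⌋₊ ∧
    (∀ P : PartialOrder (Fin n),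
        (compCount n P : ℝ) ≤ δ * ((n : ℝ) * ((n : ℝ) - 1) / 2) →
        (Nat.factorial n : ℝ) / 2 ^ ⌊δ * ((n : ℝ) * ((n : ℝ) - 1) / 2)⌋₊ ≤
          (linExtCount n P : ℝ)) ∧
    (∃ P : PartialOrder (Fin n),
        (compCount n P : ℝ) ≤ δ * ((n : ℝ) * ((n : ℝ) - 1) / 2) ∧
        (linExtCount n P : ℝ) =
          (Nat.factorial n : ℝ) / 2 ^ ⌊δ * ((n : ℝ) * ((n : ℝ) - 1) / 2)⌋₊) := by
  set B : ℝ := δ * ((n : ℝ) * ((n : ℝ) - 1) / 2) with hB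
  set m : ℕ := ⌊B⌋₊ with hm
  have hn2 : (2 : ℝ) ≤ (n : ℝ) := by exact_mod_cast hn
  have hB0 : 0 ≤ B := by
    rw [hB]
    have h0 : (0:ℝ) ≤ (n : ℝ) * ((n : ℝ) - 1) / 2 := by nlinarith
    exact mul_nonneg hδ0.le h0
  have hmB : (m : ℝ) ≤ B := Nat.floor_le hB0
  have h2m : 2 * m ≤ n := by
    have h1 : B ≤ (n : ℝ) / 2 := by
      rw [hB]
      have he : δ * ((n : ℝ) * ((n : ℝ) - 1) / 2) = (δ * ((n : ℝ) - 1)) * ((n : ℝ) / 2) := by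
        ring
      rw [he]
      nlinarith
    have h2 : (2 * m : ℝ) ≤ (n : ℝ) := by
      linarith
    exact_mod_cast h2
  have hfact := matchP_count n m h2m
  have hcompm := compCount_matchP n m h2m
  have hlow : ∀ P : PartialOrder (Fin n), (compCount n P : ℝ) ≤ B →
      n.factorial ≤ linExtCount n P * 2 ^ m := by
    intro P hP
    have hc : compCount n P ≤ m := Nat.le_floor hP
    calc n.factorial ≤ linExtCount n P * 2 ^ compCount n P := lower_bound _ P rfl
      _ ≤ linExtCount n P * 2 ^ m :=
        Nat.mul_le_mul_left _ (Nat.pow_le_pow_right (by norm_num) hc)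
  set N := linExtCount n (matchP n m) with hN
  have hmem : N ∈ {k : ℕ | ∃ P : PartialOrder (Fin n),
      (compCount n P : ℝ) ≤ B ∧ linExtCount n P = k} :=
    ⟨matchP n m, by rw [hcompm]; exact hmB, rfl⟩
  have hmin : ∀ k ∈ {k : ℕ | ∃ P : PartialOrder (Fin n),
      (compCount n P : ℝ) ≤ B ∧ linExtCount n P = k}, N ≤ k := by
    rintro k ⟨P, hP, rfl⟩
    have h1 := hlow P hP
    have h2 : N * 2 ^ m ≤ linExtCount n P * 2 ^ m := by
      rw [hfact]; exact h1
    exact Nat.le_of_mul_le_mul_right h2 (Nat.pow_pos (by norm_num))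
  have hfM : fMinus n δ = N := by
    rw [fMinus]
    exact le_antisymm (Nat.sInf_le hmem) (hmin _ (Nat.sInf_mem ⟨N, hmem⟩))
  have hpow : (0:ℝ) < 2 ^ m := by positivity
  have hNr : (N : ℝ) = (Nat.factorial n : ℝ) / 2 ^ m := by
    rw [eq_div_iff (ne_of_gt hpow)]
    exact_mod_cast hfact
  refine ⟨?_, ?_, ?_⟩
  · rw [hfM, hNr]
  · intro P hP
    rw [div_le_iff₀ hpow]
    exact_mod_cast hlow P hP
  · exact ⟨matchP n m, by rw [hcompm]; exact hmB, by rw [← hN, hNr]⟩
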